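/- Let α, α′ and d be integers with d ≥ 0 and 1 ≤ α′ ≤ α, and fix positive integers r_0 = 1, r_1, …, with r_{d−1} dividing r_d. Then, as functions on {0,1}^α × {0,1}^α, η_d refines the function (v,w) ↦ η_d(π_{α′}(v), π_{α′}(w)): for all v, w, x, y ∈ {0,1}^α, if η_d(v,w) = η_d(x,y) then η_d(π_{α′}(v), π_{α′}(w)) = η_d(π_{α′}(x), π_{α′}(y)). -/

import Mathlib

/-!
Coloring machinery of Conlon–Fox–Lee–Sudakov. Vectors in `{0,1}^α` are modelled as
`Bool` lists of length `α`. Fix block lengths `r 0 = 1, r 1, …` with `r d ∣ r (d+1)`.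
-/

/-- The blocks of resolution with block length `r`: split a vector into consecutive
blocks of length `r` (the last block may be shorter). -/
def blocksOf (r : ℕ) (v : List Bool) : List (List Bool) := v.toChunks r

/-- The function `η_d` (with `r = r_d`): records the position `i` of the first pair of
differing blocks of resolution `d` together with the unordered pair `{v_i, w_i}` of
these blocks; it takes the value `none` (playing the role of `0`) when `v = w`. -/
def eta (r : ℕ) (v w : List Bool) : Option (ℕ × Sym2 (List Bool)) :=
  ((((blocksOf r v).zip (blocksOf r w)).zipIdx.map (fun p => (p.2, p.1))).find? (fun q => q.2.1 != q.2.2)).map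
    (fun q => (q.1, s(q.2.1, q.2.2)))

/-- The function `ξ_d`: apply `η_d` to each corresponding pair of blocks of
resolution `d+1`. -/
def xi (r : ℕ → ℕ) (d : ℕ) (v w : List Bool) : List (Option (ℕ × Sym2 (List Bool))) :=
  ((blocksOf (r (d+1)) v).zip (blocksOf (r (d+1)) w)).map fun q => eta (r d) q.1 q.2

/-- The type of colors used by the coloring `c_p`. -/
abbrev EGColor := List (List (Option (ℕ × Sym2 (List Bool))))

instance : DecidableEq (List (Option (ℕ × Sym2 (List Bool)))) := instDecidableEqList
instance : DecidableEq EGColor := instDecidableEqList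

/-- The coloring `c_p (v,w) = (ξ_p(v,w), ξ_{p-1}(v,w), …, ξ_0(v,w))`. -/
def cColor (r : ℕ → ℕ) (p : ℕ) (v w : List Bool) : EGColor :=
  (List.range (p+1)).map fun j => xi r (p - j) v w

/-- The set of colors appearing under `c_p` on (unordered) pairs of distinct
elements of `S`. -/
def colorsOn (r : ℕ → ℕ) (p : ℕ) (S : Finset (List Bool)) : Finset EGColor :=
  ((S ×ˢ S).filter fun q => q.1 ≠ q.2).image fun q => cColor r p q.1 q.2

/-- The vertex set `{0,1}^α`, realized as the set of all `Bool` lists of length `α`. -/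
def allVecs (α : ℕ) : Finset (List Bool) :=
  Finset.univ.image fun v : Fin α → Bool => List.ofFn v

/-- `alphaD rd α`: the largest multiple of `rd` that is strictly less than `α`
(for `α, rd ≥ 1`). -/
def alphaD (rd α : ℕ) : ℕ := rd * ((α - 1) / rd)

/-- The set `C_E^{(d)}` of emerging colors of `S` at resolution `d`: the unordered pairs
`{v'', w''}` of final segments of elements `v = (v', v'')`, `w = (w', w'')` of `S`
(split at `α_d`) with `v' = w'` and `v'' ≠ w''`. -/
def CEset (r : ℕ → ℕ) (α : ℕ) (S : Finset (List Bool)) (d : ℕ) : Finset (Sym2 (List Bool)) :=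
  ((S ×ˢ S).filter fun q =>
      q.1.take (alphaD (r d) α) = q.2.take (alphaD (r d) α) ∧
      q.1.drop (alphaD (r d) α) ≠ q.2.drop (alphaD (r d) α)).image
    fun q => s(q.1.drop (alphaD (r d) α), q.2.drop (alphaD (r d) α))

/-- The set `C_I^{(d)}` of inherited colors of `S` at resolution `d`: the pairs
`(c_p(v', w'), η_{d-1}(v'', w''))` over elements `v = (v', v'')`, `w = (w', w'')` of `S`
(split at `α_d`) with `v' ≠ w'`. -/
def CIset (r : ℕ → ℕ) (p α : ℕ) (S : Finset (List Bool)) (d : ℕ) :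
    Finset (EGColor × Option (ℕ × Sym2 (List Bool))) :=
  ((S ×ˢ S).filter fun q =>
      q.1.take (alphaD (r d) α) ≠ q.2.take (alphaD (r d) α)).image
    fun q => (cColor r p (q.1.take (alphaD (r d) α)) (q.2.take (alphaD (r d) α)),
              eta (r (d-1)) (q.1.drop (alphaD (r d) α)) (q.2.drop (alphaD (r d) α)))

/-! Auxiliary machinery for `stmt5`. -/

/-- A clean recursive chunking function: chunks of size `n+1`. -/
private def chunksP {γ : Type*} (n : ℕ) : List γ → List (List γ)
  | [] => []
  | x :: xs => (x :: xs.take n) :: chunksP n (xs.drop n)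
termination_by l => l.length
decreasing_by simp only [List.length_drop, List.length_cons]; omega

private lemma chunksP_nil {γ : Type*} (n : ℕ) : chunksP n ([] : List γ) = [] := by
  simp [chunksP]

private lemma chunksP_cons' {γ : Type*} (n : ℕ) (x : γ) (xs : List γ) :
    chunksP n (x :: xs) = (x :: xs.take n) :: chunksP n (xs.drop n) := by
  rw [chunksP]

/-- Reference implementation of `List.toChunks.go`'s accumulator behavior. -/
private def fillChunks {γ : Type*} (n : ℕ) : List γ → List γ → List (List γ)
  | cur, [] => [cur]
  | cur, x :: xs =>
    if cur.length = n then cur :: fillChunks n [x] xs else fillChunks n (cur ++ [x]) xs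

private lemma toChunks_go_eq {γ : Type*} (n : ℕ) :
    ∀ (l : List γ) (acc₁ : Array γ) (acc₂ : Array (List γ)),
      List.toChunks.go n l acc₁ acc₂ = acc₂.toList ++ fillChunks n acc₁.toList l := by
  intro l
  induction l with
  | nil => intro acc₁ acc₂; simp [List.toChunks.go, fillChunks]
  | cons x xs ih =>
    intro acc₁ acc₂
    rw [List.toChunks.go]
    by_cases h : acc₁.size = n
    · simp only [h, beq_self_eq_true, if_pos, ih]
      have hl : acc₁.toList.length = n := by simp [h]
      simp [fillChunks, hl]
    · have hb : (acc₁.size == n) = false := by simp [h]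
      rw [hb]
      simp only [ih]
      have hl : acc₁.toList.length ≠ n := by simpa using h
      simp [fillChunks, hl, h]

private lemma fillChunks_spec {γ : Type*} (n : ℕ) (hn : 0 < n) :
    ∀ (l cur : List γ), cur ≠ [] → cur.length ≤ n →
      fillChunks n cur l = chunksP (n - 1) (cur ++ l) := by
  intro l
  induction l with
  | nil =>
    intro cur hne hlen
    obtain ⟨c, cs, rfl⟩ := List.exists_cons_of_ne_nil hne
    have h1 : cs.length ≤ n - 1 := by simp at hlen; omega
    simp [fillChunks, chunksP_cons', List.take_of_length_le h1,
      List.drop_eq_nil_of_le h1, chunksP_nil]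
  | cons x xs ih =>
    intro cur hne hlen
    obtain ⟨c, cs, rfl⟩ := List.exists_cons_of_ne_nil hne
    rw [fillChunks]
    by_cases h : (c :: cs).length = n
    · rw [if_pos h, ih [x] (by simp) (by simp; omega)]
      have hcs : cs.length = n - 1 := by simp at h; omega
      have ht : (cs ++ x :: xs).take (n - 1) = cs := by
        rw [List.take_append_of_le_length (by omega), List.take_of_length_le (by omega)]
      have hd : (cs ++ x :: xs).drop (n - 1) = x :: xs := by
        rw [List.drop_append_of_le_length (by omega), List.drop_eq_nil_of_le (by omega),
          List.nil_append]
      simp only [List.singleton_append]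
      rw [List.cons_append, chunksP_cons' _ c (cs ++ x :: xs), ht, hd]
    · rw [if_neg h, ih (c :: cs ++ [x]) (by simp) (by simp at h hlen ⊢; omega)]
      simp

private lemma toChunks_eq_chunksP {γ : Type*} (n : ℕ) (hn : 0 < n) (l : List γ) :
    l.toChunks n = chunksP (n - 1) l := by
  cases l with
  | nil => simp [List.toChunks, chunksP_nil]
  | cons x xs =>
    obtain ⟨m, rfl⟩ : ∃ m, n = m + 1 := ⟨n - 1, by omega⟩
    rw [show List.toChunks (m + 1) (x :: xs) = List.toChunks.go (m + 1) xs #[x] #[] from rfl,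
      toChunks_go_eq]
    simp only [Array.toList_empty, List.nil_append]
    rw [fillChunks_spec (m + 1) (by omega) xs [x] (by simp) (by simp)]
    simp

/-- Recursive reference implementation of the `find?`-based `eta`. -/
private def etaAux : List (List Bool × List Bool) → Option (ℕ × Sym2 (List Bool))
  | [] => none
  | (a, b) :: l =>
    if a = b then (etaAux l).map (fun q => (q.1 + 1, q.2)) else some (0, s(a, b))

private lemma find?_etaAux :
    ∀ l : List (List Bool × List Bool),
      (((l.zipIdx.map (fun p => (p.2, p.1))).find? fun q => q.2.1 != q.2.2).map fun q => (q.1, s(q.2.1, q.2.2))) = etaAux l := by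
  intro l
  induction l with
  | nil => simp [etaAux]
  | cons ab l ih =>
    obtain ⟨a, b⟩ := ab
    rw [show ((a, b) :: l).zipIdx.map (fun p => (p.2, p.1)) =
        (0, (a, b)) :: (l.zipIdx.map (fun p => (p.2, p.1))).map (Prod.map (· + 1) id) by
      rw [List.zipIdx_cons', List.map_cons, List.map_map, List.map_map]; rfl]
    by_cases h : a = b
    · subst h
      rw [List.find?_cons_of_neg (by simp)]
      rw [List.find?_map]
      have hp : ((fun q : ℕ × List Bool × List Bool => q.2.1 != q.2.2) ∘
          Prod.map (· + 1) id) = fun q : ℕ × List Bool × List Bool => q.2.1 != q.2.2 := by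
        funext q; rfl
      rw [hp, Option.map_map, etaAux, if_pos rfl, ← ih, Option.map_map]
      rfl
    · rw [List.find?_cons_of_pos (by simpa using h)]
      simp [etaAux, h]

/-- `eta` in terms of `chunksP` and `etaAux`. -/
private def eta' (r : ℕ) (v w : List Bool) : Option (ℕ × Sym2 (List Bool)) :=
  etaAux ((chunksP (r - 1) v).zip (chunksP (r - 1) w))

private lemma eta_eq_eta' (r : ℕ) (hr : 0 < r) (v w : List Bool) :
    eta r v w = eta' r v w := by
  rw [eta, eta', blocksOf, blocksOf, toChunks_eq_chunksP r hr, toChunks_eq_chunksP r hr,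
    find?_etaAux]

private lemma eta'_nil (r : ℕ) : eta' r [] [] = none := by
  simp [eta', chunksP_nil, etaAux]

private lemma eta'_cons (r : ℕ) (hr : 0 < r) (v w : List Bool) (hv : v ≠ []) (hw : w ≠ []) :
    eta' r v w =
      if v.take r = w.take r then
        (eta' r (v.drop r) (w.drop r)).map (fun q => (q.1 + 1, q.2))
      else some (0, s(v.take r, w.take r)) := by
  obtain ⟨a, v', rfl⟩ := List.exists_cons_of_ne_nil hv
  obtain ⟨b, w', rfl⟩ := List.exists_cons_of_ne_nil hw
  obtain ⟨m, rfl⟩ : ∃ m, r = m + 1 := ⟨r - 1, by omega⟩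
  rw [eta', chunksP_cons', chunksP_cons']
  simp only [Nat.add_sub_cancel, List.zip_cons_cons, List.take_succ_cons, List.drop_succ_cons]
  rw [etaAux]
  rfl

/-- The refinement function: how `eta` of truncations is computed from `eta`. -/
private def etaF (r α' : ℕ) (o : Option (ℕ × Sym2 (List Bool))) :
    Option (ℕ × Sym2 (List Bool)) :=
  o.bind fun q =>
    if α' ≤ q.1 * r then none
    else if (q.2.map (List.take (α' - q.1 * r))).IsDiag then none
    else some (q.1, q.2.map (List.take (α' - q.1 * r)))

private lemma etaF_zero (r : ℕ) (o : Option (ℕ × Sym2 (List Bool))) : etaF r 0 o = none := by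
  rcases o with _ | ⟨i, s⟩ <;> simp [etaF]

private lemma etaF_shift (r α' : ℕ) (o : Option (ℕ × Sym2 (List Bool))) :
    etaF r α' (o.map fun q => (q.1 + 1, q.2)) =
      (etaF r (α' - r) o).map fun q => (q.1 + 1, q.2) := by
  rcases o with _ | ⟨i, s⟩
  · simp [etaF]
  · simp only [Option.map_some, etaF, Option.bind_some]
    have hs : (i + 1) * r = i * r + r := by ring
    have h1 : (α' ≤ (i + 1) * r) ↔ (α' - r ≤ i * r) := by omega
    have h2 : α' - (i + 1) * r = α' - r - i * r := by omega
    rw [h2]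
    by_cases h : α' - r ≤ i * r
    · rw [if_pos (h1.mpr h), if_pos h, Option.map_none]
    · rw [if_neg (fun hh => h (h1.mp hh)), if_neg h]
      by_cases hd : (Sym2.map (List.take (α' - r - i * r)) s).IsDiag
      · rw [if_pos hd, if_pos hd, Option.map_none]
      · rw [if_neg hd, if_neg hd, Option.map_some]

private lemma eta'_take (r : ℕ) (hr : 0 < r) :
    ∀ (n : ℕ) (v w : List Bool), v.length ≤ n → v.length = w.length → ∀ α',
      eta' r (v.take α') (w.take α') = etaF r α' (eta' r v w) := by
  intro n
  induction n with
  | zero =>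
    intro v w hn hl α'
    have hv : v = [] := List.eq_nil_of_length_eq_zero (by omega)
    have hw : w = [] := List.eq_nil_of_length_eq_zero (by omega)
    subst hv; subst hw
    simp [eta'_nil, etaF]
  | succ n ih =>
    intro v w hn hl α'
    cases v with
    | nil =>
      have hw : w = [] := List.eq_nil_of_length_eq_zero (by simp at hl; omega)
      subst hw
      simp [eta'_nil, etaF]
    | cons a v' =>
      cases w with
      | nil => simp at hl
      | cons b w' =>
        rcases Nat.eq_zero_or_pos α' with rfl | hα'
        · simp only [List.take_zero]
          rw [eta'_nil, etaF_zero]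
        have hvne : (a :: v') ≠ [] := by simp
        have hwne : (b :: w') ≠ [] := by simp
        have hvtne : ((a :: v').take α') ≠ [] := by
          simp [List.take_eq_nil_iff]; omega
        have hwtne : ((b :: w').take α') ≠ [] := by
          simp [List.take_eq_nil_iff]; omega
        set v : List Bool := a :: v' with hv
        set w : List Bool := b :: w' with hw
        rw [eta'_cons r hr v w hvne hwne, eta'_cons r hr _ _ hvtne hwtne]
        rw [List.take_take, List.take_take, List.drop_take, List.drop_take]
        by_cases hA : v.take r = w.take r
        · rw [if_pos hA]
          have hmin : v.take (min r α') = w.take (min r α') := by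
            rw [Nat.min_comm, ← List.take_take, ← List.take_take, hA]
          rw [if_pos hmin]
          have hlen' : (v.drop r).length ≤ n := by
            simp only [hv, List.length_drop, List.length_cons] at hn ⊢; omega
          have hleq : (v.drop r).length = (w.drop r).length := by
            simp [List.length_drop, hl]
          rw [ih (v.drop r) (w.drop r) hlen' hleq (α' - r), etaF_shift]
        · rw [if_neg hA]
          simp only [etaF, Option.bind_some, Nat.zero_mul, Nat.sub_zero, Sym2.map_pair_eq,
            Sym2.mk_isDiag_iff, List.take_take, if_neg (show ¬ α' ≤ 0 by omega)]
          rw [Nat.min_comm α' r]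
          by_cases hE : v.take (min r α') = w.take (min r α')
          · rw [if_pos hE, if_pos hE]
            have hle : α' ≤ r := by
              by_contra hc
              have hm : min r α' = r := by omega
              rw [hm] at hE
              exact hA hE
            have h0 : α' - r = 0 := by omega
            rw [h0]
            simp only [List.take_zero]
            rw [eta'_nil, Option.map_none]
          · rw [if_neg hE, if_neg hE]

/-- **Lemma 4.2(i).** For `d ≥ 0` and `1 ≤ α' ≤ α`, the function `η_d` refines
`(v, w) ↦ η_d(π_{α'}(v), π_{α'}(w))` on `{0,1}^α × {0,1}^α`. -/
theorem stmt5 (α α' d : ℕ) (hα' : 1 ≤ α') (hα : α' ≤ α) (r : ℕ → ℕ) (hr0 : r 0 = 1)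
    (hrpos : ∀ e, 0 < r e) (hrdvd : ∀ e, r e ∣ r (e + 1))
    (v w x y : List Bool) (hv : v.length = α) (hw : w.length = α)
    (hx : x.length = α) (hy : y.length = α)
    (h : eta (r d) v w = eta (r d) x y) :
    eta (r d) (v.take α') (w.take α') = eta (r d) (x.take α') (y.take α') := by
  have hr : 0 < r d := hrpos d
  rw [eta_eq_eta' (r d) hr, eta_eq_eta' (r d) hr,
    eta'_take (r d) hr α v w (by omega) (by omega) α',
    eta'_take (r d) hr α x y (by omega) (by omega) α',
    ← eta_eq_eta' (r d) hr v w, ← eta_eq_eta' (r d) hr x y, h]
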